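/- Suppose m < n = q and set ν = (n−m)/(q(s−1)). If λ + ν < 0, then for every σ > 0 there exist δ > 0 and t1 ≥ t0 such that every admissible solution with v(t1) ≤ δ satisfies v(t) ≤ v(t1)·(t/t1)^{λ+σ} for all t ≥ t1 (polynomial stability). If λ + ν > 0 and γ < 0, then there exist δ > 0, t1 ≥ t0 and K > 0 such that every admissible solution with v(t1) ≤ δ satisfies v(t) ≤ K·t^{−ν} for all t ≥ t1 (polynomial stability). -/

import Mathlib

open Real Set Filter

lemma barrier {t1 : ℝ} {v w f g : ℝ → ℝ}
    (hv : ∀ t ≥ t1, HasDerivAt v (f t) t)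
    (hw : ∀ t ≥ t1, HasDerivAt w (g t) t)
    (h0 : v t1 < w t1)
    (hcross : ∀ t, t1 < t → v t = w t → f t < g t) :
    ∀ t ≥ t1, v t < w t := by
  intro T hT
  by_contra hc
  push_neg at hc
  set u : ℝ → ℝ := fun r => v r - w r with hu_def
  have hu : ∀ r ≥ t1, HasDerivAt u (f r - g r) r := fun r hr => (hv r hr).sub (hw r hr)
  have hcont : ContinuousOn u (Set.Icc t1 T) := fun r hr =>
    ((hu r hr.1).continuousAt).continuousWithinAt
  set E : Set ℝ := Set.Icc t1 T ∩ u ⁻¹' Set.Ici 0 with hE_def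
  have hTE : T ∈ E := ⟨⟨hT, le_refl T⟩, by simp [hu_def, sub_nonneg.2 hc]⟩
  have hEc : IsClosed E := hcont.preimage_isClosed_of_isClosed isClosed_Icc isClosed_Ici
  have hne : E.Nonempty := ⟨T, hTE⟩
  have hbdd : BddBelow E := ⟨t1, fun r hr => hr.1.1⟩
  set a := sInf E with ha_def
  have haE : a ∈ E := hEc.csInf_mem hne hbdd
  have hua_nonneg : 0 ≤ u a := haE.2
  have ht1a : t1 < a := by
    rcases lt_or_eq_of_le haE.1.1 with h | h
    · exact h
    · exfalso
      have : u t1 < 0 := sub_neg.2 h0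
      rw [h] at this; linarith
  have hbelow : ∀ r, t1 ≤ r → r < a → u r < 0 := by
    intro r hr1 hra
    by_contra h
    push_neg at h
    have hrE : r ∈ E := ⟨⟨hr1, hra.le.trans haE.1.2⟩, h⟩
    exact absurd (csInf_le hbdd hrE) (not_le.2 hra)
  have hmem : Set.Ioo t1 a ∈ nhdsWithin a (Set.Iio a) :=
    Ioo_mem_nhdsLT_of_mem ⟨ht1a, le_refl a⟩
  have hua_le : u a ≤ 0 := by
    have htend : Filter.Tendsto u (nhdsWithin a (Set.Iio a)) (nhds (u a)) :=
      ((hu a ht1a.le).continuousAt).continuousWithinAt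
    refine le_of_tendsto htend ?_
    filter_upwards [hmem] with r hr
    exact (hbelow r hr.1.le hr.2).le
  have hua : u a = 0 := le_antisymm hua_le hua_nonneg
  have hva : v a = w a := sub_eq_zero.1 hua
  have hfg : f a - g a < 0 := sub_neg.2 (hcross a ht1a hva)
  have hslope : Filter.Tendsto (slope u a) (nhdsWithin a {a}ᶜ) (nhds (f a - g a)) :=
    hasDerivAt_iff_tendsto_slope.1 (hu a ht1a.le)
  have hslope' : Filter.Tendsto (slope u a) (nhdsWithin a (Set.Iio a)) (nhds (f a - g a)) :=
    hslope.mono_left (nhdsWithin_mono a (fun x hx => ne_of_lt hx))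
  have hge : 0 ≤ f a - g a := by
    refine ge_of_tendsto hslope' ?_
    filter_upwards [hmem] with r hr
    have h1 : u r ≤ 0 := (hbelow r hr.1.le hr.2).le
    have h2 : r - a ≤ 0 := sub_nonpos.2 hr.2.le
    rw [slope_def_field, hua, sub_zero]
    exact div_nonneg_iff.2 (Or.inr ⟨h1, h2⟩)
  linarith

/-- If `B^(1/c) ≤ t` with `B, c > 0` then `t^(-c) ≤ B⁻¹`. -/
lemma rpow_neg_le_inv {B c t : ℝ} (hB : 0 < B) (hc : 0 < c) (ht : B ^ (1/c) ≤ t) :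
    t ^ (-c) ≤ B⁻¹ := by
  have ht0 : 0 < t := lt_of_lt_of_le (Real.rpow_pos_of_pos hB _) ht
  have h1 : B ≤ t ^ c := by
    calc B = (B ^ (1/c)) ^ c := by
          rw [← Real.rpow_mul hB.le, one_div, inv_mul_cancel₀ hc.ne', Real.rpow_one]
      _ ≤ t ^ c := Real.rpow_le_rpow (Real.rpow_pos_of_pos hB _).le ht hc.le
  rw [Real.rpow_neg ht0.le]
  exact inv_anti₀ hB h1


/-- An admissible solution of the reduced equation
`v'(t) = γ·t^{−m/q}·v(t)^s + λ·t^{−n/q}·v(t) + ρ(t)` on `[t0,∞)` with values in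
`[0,d0]`, where `|ρ(t)| ≤ M·(t^{−m/q}·v(t)^s + t^{−n/q}·v(t))·(v(t) + t^{−1/q})`. -/
def IsAdmissible (q m n s : ℕ) (γ lam d0 t0 M : ℝ) (v : ℝ → ℝ) : Prop :=
  (∀ t ≥ t0, v t ∈ Set.Icc (0:ℝ) d0) ∧
  ∃ ρ : ℝ → ℝ,
    (∀ t ≥ t0, |ρ t| ≤
      M * (t ^ (-(m:ℝ)/(q:ℝ)) * v t ^ s + t ^ (-(n:ℝ)/(q:ℝ)) * v t)
        * (v t + t ^ (-(1:ℝ)/(q:ℝ)))) ∧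
    (∀ t ≥ t0, HasDerivAt v
      (γ * t ^ (-(m:ℝ)/(q:ℝ)) * v t ^ s + lam * t ^ (-(n:ℝ)/(q:ℝ)) * v t + ρ t) t)

set_option maxHeartbeats 2000000 in
/-- the case `m < n = q` with `ν = (n−m)/(q(s−1))`: polynomial
stability when `λ + ν < 0`, and when `λ + ν > 0`, `γ < 0`. -/
theorem polynomial_stability_m_lt_n_eq_q
    (q m n s : ℕ) (hq : 0 < q) (hm : 0 < m) (hmn : m < n) (hnq : n = q) (hs : 2 ≤ s)
    (γ lam d0 t0 M : ℝ) (hγ : γ ≠ 0) (hlam : lam ≠ 0)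
    (hd0 : 0 < d0) (ht0 : 0 < t0) (hM : 0 < M) :
    ∀ ν : ℝ, ν = ((n:ℝ) - (m:ℝ)) / ((q:ℝ) * ((s:ℝ) - 1)) →
    ((lam + ν < 0 →
      ∀ σ > 0, ∃ δ > 0, ∃ t1 ≥ t0,
        ∀ v : ℝ → ℝ, IsAdmissible q m n s γ lam d0 t0 M v → v t1 ≤ δ →
          ∀ t ≥ t1, v t ≤ v t1 * (t / t1) ^ (lam + σ)) ∧
     (lam + ν > 0 → γ < 0 →
      ∃ δ > 0, ∃ t1 ≥ t0, ∃ K > 0,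
        ∀ v : ℝ → ℝ, IsAdmissible q m n s γ lam d0 t0 M v → v t1 ≤ δ →
          ∀ t ≥ t1, v t ≤ K * t ^ (-ν))) := by
  intro ν hν
  have hnqR : ((n:ℕ) : ℝ) = ((q:ℕ) : ℝ) := by exact_mod_cast hnq
  have hq0 : (0:ℝ) < (q:ℝ) := by exact_mod_cast hq
  have hs2 : (2:ℝ) ≤ (s:ℝ) := by exact_mod_cast hs
  have hs1 : (0:ℝ) < (s:ℝ) - 1 := by linarith
  have hmq : (m:ℝ) < (q:ℝ) := by rw [← hnqR]; exact_mod_cast hmn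
  have hmn' : (m:ℝ) < (n:ℝ) := by exact_mod_cast hmn
  have hν0 : 0 < ν := by
    rw [hν]; exact div_pos (by linarith) (by positivity)
  have hcast : ((s-1 : ℕ) : ℝ) = (s:ℝ) - 1 := by
    push_cast [Nat.cast_sub (by omega : 1 ≤ s)]; ring
  have hkey : ν * ((s:ℝ) - 1) = 1 - (m:ℝ)/(q:ℝ) := by
    rw [hν, hnqR]; field_simp
  have htinv : ∀ t : ℝ, t ^ (-(n:ℝ)/(q:ℝ)) = t⁻¹ := by
    intro t
    rw [hnqR, show -(q:ℝ)/(q:ℝ) = -1 by field_simp, Real.rpow_neg_one]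
  -- power collapse
  have hcollapse : ∀ t : ℝ, 0 < t →
      t ^ (-(m:ℝ)/(q:ℝ)) * (t ^ (-ν)) ^ (s-1) = t⁻¹ := by
    intro t ht
    rw [← Real.rpow_natCast (t ^ (-ν)) (s-1), hcast, ← Real.rpow_mul ht.le,
      ← Real.rpow_add ht]
    have : -(m:ℝ)/(q:ℝ) + -ν * ((s:ℝ)-1) = -1 := by
      linear_combination -hkey
    rw [this, Real.rpow_neg_one]
  -- generic: raising (y^(1/(s-1)))^(s-1) = y for y > 0
  have hpow_inv : ∀ y : ℝ, 0 < y → (y ^ (1/((s:ℝ)-1))) ^ (s-1) = y := by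
    intro y hy
    rw [← Real.rpow_natCast (y ^ (1/((s:ℝ)-1))) (s-1), hcast, ← Real.rpow_mul hy.le,
      one_div, inv_mul_cancel₀ hs1.ne', Real.rpow_one]
  have hsplit : ∀ x : ℝ, x ^ s = x ^ (s-1) * x := by
    intro x
    rw [← pow_succ, Nat.sub_add_cancel (by omega : 1 ≤ s)]
  constructor
  · -- PART 1
    intro hneg σ hσ
    have habs : 0 < |γ| := abs_pos.2 hγ
    set σ' := min σ ((-(lam + ν))/2) with hσ'def
    have hσ'0 : 0 < σ' := lt_min hσ (by linarith)
    have hσ'σ : σ' ≤ σ := min_le_left _ _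
    set A := lam + σ' with hA_def
    have hAν : A + ν < 0 := by
      have h := min_le_right σ ((-(lam + ν))/2)
      have : σ' ≤ (-(lam + ν))/2 := h
      simp only [hA_def]; linarith
    have hA0 : A < 0 := by linarith
    set c1 := (σ'/(4*|γ|)) ^ (1/((s:ℝ)-1)) with hc1_def
    have hc1base : 0 < σ'/(4*|γ|) := div_pos hσ'0 (by positivity)
    have hc1 : 0 < c1 := Real.rpow_pos_of_pos hc1base _
    have hc1s : c1 ^ (s-1) = σ'/(4*|γ|) := hpow_inv _ hc1base
    set C2 := M * (σ'/(4*|γ|) + 1) with hC2_def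
    have hC2 : 0 < C2 := by positivity
    set t1 := max t0 ((8*C2/σ') ^ (1/((1:ℝ)/(q:ℝ)))) with ht1_def
    have ht1t0 : t0 ≤ t1 := le_max_left _ _
    have ht1pos : 0 < t1 := lt_of_lt_of_le ht0 ht1t0
    have hb2 : t1 ^ (-(1:ℝ)/(q:ℝ)) ≤ σ'/(8*C2) := by
      have hqinv : (0:ℝ) < (1:ℝ)/(q:ℝ) := by positivity
      have h := rpow_neg_le_inv (t := t1) (by positivity : (0:ℝ) < 8*C2/σ') hqinv
        (le_max_right t0 _)
      rw [neg_div]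
      calc t1 ^ (-((1:ℝ)/(q:ℝ))) ≤ (8*C2/σ')⁻¹ := h
        _ = σ'/(8*C2) := by rw [inv_div]
    set δ := min (c1 * t1 ^ (-ν)/2) (σ'/(16*C2)) with hδ_def
    have hδ : 0 < δ := lt_min (by positivity) (by positivity)
    have hδ1 : δ ≤ c1 * t1 ^ (-ν)/2 := min_le_left _ _
    have hδ2 : δ ≤ σ'/(16*C2) := min_le_right _ _
    clear_value σ' A c1 C2 t1 δ
    refine ⟨δ, hδ, t1, ht1t0, ?_⟩
    intro v hadm hvδ t ht
    obtain ⟨hrange, ρ, hρ, hderiv⟩ := hadm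
    have hv0 : 0 ≤ v t1 := (hrange t1 ht1t0).1
    have htpos : 0 < t := lt_of_lt_of_le ht1pos ht
    have h1le : 1 ≤ t/t1 := (one_le_div ht1pos).2 ht
    have stepA : ∀ ε, 0 < ε → ε ≤ δ → ∀ r ≥ t1, v r < (v t1 + ε) * (r/t1) ^ A := by
      intro ε hε hεδ
      refine barrier (f := fun r => γ * r ^ (-(m:ℝ)/(q:ℝ)) * v r ^ s
          + lam * r ^ (-(n:ℝ)/(q:ℝ)) * v r + ρ r)
        (g := fun r => (v t1 + ε) * (A * (r/t1) ^ (A - 1) * (1/t1)))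
        (fun r hr => hderiv r (le_trans ht1t0 hr)) (fun r hr => ?_) ?_ ?_
      · have hrpos : 0 < r := lt_of_lt_of_le ht1pos hr
        have h1 : HasDerivAt (fun y : ℝ => y/t1) (1/t1) r := (hasDerivAt_id r).div_const t1
        have h2 : HasDerivAt (fun y : ℝ => (y/t1) ^ A) (A * (r/t1) ^ (A-1) * (1/t1)) r :=
          by have := (Real.hasDerivAt_rpow_const (p := A) (Or.inl (ne_of_gt (div_pos hrpos ht1pos)))).comp r h1; exact this
        exact h2.const_mul _
      · rw [div_self ht1pos.ne', Real.one_rpow, mul_one]; linarith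
      · intro r hr hvr
        have hr0 : 0 < r := lt_trans ht1pos hr
        have hrt0 : t0 ≤ r := le_trans ht1t0 hr.le
        have hrdiv : 0 < r/t1 := div_pos hr0 ht1pos
        have hrdiv1 : 1 ≤ r/t1 := (one_le_div ht1pos).2 hr.le
        set x := v r with hx_def
        have hx0 : 0 ≤ x := (hrange r hrt0).1
        have hxpos : 0 < x := by
          rw [hvr]; positivity
        set p := r ^ (-(m:ℝ)/(q:ℝ)) with hp_def
        have hp : 0 < p := Real.rpow_pos_of_pos hr0 _
        -- x is small: two bounds
        have hx2δA : x ≤ 2*δ * (r/t1) ^ A := by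
          rw [hvr]
          have : v t1 + ε ≤ 2*δ := by linarith
          exact mul_le_mul_of_nonneg_right this (Real.rpow_nonneg hrdiv.le _)
        have hxsmall : x ≤ σ'/(8*C2) := by
          have h1 : (r/t1) ^ A ≤ 1 := Real.rpow_le_one_of_one_le_of_nonpos hrdiv1 hA0.le
          have h2 : 2*δ * (r/t1) ^ A ≤ 2*δ := by
            calc 2*δ * (r/t1) ^ A ≤ 2*δ * 1 :=
                  mul_le_mul_of_nonneg_left h1 (by linarith only [hδ])
              _ = 2*δ := mul_one _
          have h3 : 2*δ ≤ σ'/(8*C2) := by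
            have h4 : 2*(σ'/(16*C2)) = σ'/(8*C2) := by ring
            linarith only [hδ2, h4]
          linarith only [h2, h3, hx2δA]
        have hxν : x ≤ c1 * r ^ (-ν) := by
          have h1 : (r/t1) ^ A ≤ (r/t1) ^ (-ν) :=
            Real.rpow_le_rpow_of_exponent_le hrdiv1 (by linarith)
          have h2 : (r/t1) ^ (-ν) = r ^ (-ν) * t1 ^ ν := by
            rw [Real.div_rpow hr0.le ht1pos.le, div_eq_mul_inv, ← Real.rpow_neg ht1pos.le,
              neg_neg]
          have h3 : 2*δ * t1 ^ ν ≤ c1 := by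
            have ht1ν : 0 < t1 ^ ν := Real.rpow_pos_of_pos ht1pos _
            have h4 : 2*δ ≤ c1 * t1 ^ (-ν) := by linarith
            calc 2*δ * t1 ^ ν ≤ c1 * t1 ^ (-ν) * t1 ^ ν :=
                  mul_le_mul_of_nonneg_right h4 ht1ν.le
              _ = c1 := by
                  rw [mul_assoc, ← Real.rpow_add ht1pos, neg_add_cancel, Real.rpow_zero,
                    mul_one]
          calc x ≤ 2*δ * (r/t1) ^ A := hx2δA
            _ ≤ 2*δ * (r/t1) ^ (-ν) := by
                have h2δ : (0:ℝ) ≤ 2*δ := by linarith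
                exact mul_le_mul_of_nonneg_left h1 h2δ
            _ = 2*δ * t1 ^ ν * r ^ (-ν) := by rw [h2]; ring
            _ ≤ c1 * r ^ (-ν) :=
                mul_le_mul_of_nonneg_right h3 (Real.rpow_pos_of_pos hr0 _).le
        -- nonlinear term bound
        have hpx : p * x ^ (s-1) ≤ σ'/(4*|γ|) * r⁻¹ := by
          have h1 : x ^ (s-1) ≤ (c1 * r ^ (-ν)) ^ (s-1) := pow_le_pow_left₀ hx0 hxν _
          have h2 : p * (c1 * r ^ (-ν)) ^ (s-1) = σ'/(4*|γ|) * r⁻¹ := by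
            rw [mul_pow, ← mul_assoc, mul_comm p, mul_assoc, hcollapse r hr0, hc1s]
          calc p * x ^ (s-1) ≤ p * (c1 * r ^ (-ν)) ^ (s-1) :=
                mul_le_mul_of_nonneg_left h1 hp.le
            _ = σ'/(4*|γ|) * r⁻¹ := h2
        have hpxs : p * x ^ s ≤ σ'/(4*|γ|) * r⁻¹ * x := by
          rw [hsplit x, ← mul_assoc]
          exact mul_le_mul_of_nonneg_right hpx hx0
        have hterm1 : γ * p * x ^ s ≤ σ'/4 * r⁻¹ * x := by
          have h1 : γ * p * x ^ s ≤ |γ| * (p * x ^ s) := by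
            rw [mul_assoc]
            exact mul_le_mul_of_nonneg_right (le_abs_self γ) (by positivity)
          have h2 : |γ| * (p * x ^ s) ≤ |γ| * (σ'/(4*|γ|) * r⁻¹ * x) :=
            mul_le_mul_of_nonneg_left hpxs habs.le
          have h3 : |γ| * (σ'/(4*|γ|) * r⁻¹ * x) = σ'/4 * r⁻¹ * x := by
            field_simp
          linarith only [h1, h2, h3]
        -- remainder bound
        have hmono_q : r ^ (-(1:ℝ)/(q:ℝ)) ≤ σ'/(8*C2) := by
          refine le_trans (Real.rpow_le_rpow_of_nonpos ht1pos hr.le ?_) hb2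
          rw [neg_div]; exact neg_nonpos.2 (by positivity)
        have hterm3 : ρ r ≤ σ'/4 * r⁻¹ * x := by
          have hb := hρ r hrt0
          rw [htinv] at hb
          have hf1 : M * (p * x ^ s + r⁻¹ * x) ≤ C2 * r⁻¹ * x := by
            have : p * x ^ s + r⁻¹ * x ≤ (σ'/(4*|γ|) + 1) * r⁻¹ * x := by
              have hexp : (σ'/(4*|γ|) + 1) * r⁻¹ * x = σ'/(4*|γ|) * r⁻¹ * x + r⁻¹ * x := by
                ring
              rw [hexp]
              linarith only [hpxs]
            calc M * (p * x ^ s + r⁻¹ * x) ≤ M * ((σ'/(4*|γ|) + 1) * r⁻¹ * x) :=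
                  mul_le_mul_of_nonneg_left this hM.le
              _ = C2 * r⁻¹ * x := by rw [hC2_def]; ring
          have hf2 : x + r ^ (-(1:ℝ)/(q:ℝ)) ≤ σ'/(4*C2) := by
            calc x + r ^ (-(1:ℝ)/(q:ℝ)) ≤ σ'/(8*C2) + σ'/(8*C2) := add_le_add hxsmall hmono_q
              _ = σ'/(4*C2) := by ring
          have hfpos1 : 0 ≤ M * (p * x ^ s + r⁻¹ * x) := by positivity
          have hfpos2 : 0 ≤ x + r ^ (-(1:ℝ)/(q:ℝ)) := by positivity
          calc ρ r ≤ |ρ r| := le_abs_self _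
            _ ≤ M * (p * x ^ s + r⁻¹ * x) * (x + r ^ (-(1:ℝ)/(q:ℝ))) := hb
            _ ≤ (C2 * r⁻¹ * x) * (σ'/(4*C2)) := by
                apply mul_le_mul hf1 hf2 hfpos2 (by positivity)
            _ = σ'/4 * r⁻¹ * x := by field_simp
        -- conclude
        show γ * r ^ (-(m:ℝ)/(q:ℝ)) * v r ^ s + lam * r ^ (-(n:ℝ)/(q:ℝ)) * v r + ρ r
            < (v t1 + ε) * (A * (r/t1) ^ (A - 1) * (1/t1))
        rw [htinv]
        have hgr : (v t1 + ε) * (A * (r/t1) ^ (A - 1) * (1/t1)) = A * r⁻¹ * x := by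
          rw [hvr, show A - 1 = A + (-1) by ring, Real.rpow_add hrdiv, Real.rpow_neg_one]
          field_simp
        rw [hgr]
        have hrx : 0 < r⁻¹ * x := by positivity
        calc γ * p * x ^ s + lam * r⁻¹ * x + ρ r
            ≤ σ'/4 * r⁻¹ * x + lam * r⁻¹ * x + σ'/4 * r⁻¹ * x := by
              linarith only [hterm1, hterm3]
          _ = (lam + σ'/2) * (r⁻¹ * x) := by ring
          _ < (lam + σ') * (r⁻¹ * x) :=
              mul_lt_mul_of_pos_right (by linarith only [hσ'0]) hrx
          _ = A * r⁻¹ * x := by rw [hA_def]; ring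
    -- limit ε → 0
    have hC : 0 < (t/t1) ^ A := Real.rpow_pos_of_pos (div_pos htpos ht1pos) _
    have hB : v t ≤ v t1 * (t/t1) ^ A := by
      by_contra hcon
      push_neg at hcon
      set η := (v t - v t1 * (t/t1) ^ A)/2 with hη_def
      have hη : 0 < η := by simp only [hη_def]; linarith
      set ε := min δ (η / (t/t1) ^ A) with hε_def
      have hε : 0 < ε := lt_min hδ (div_pos hη hC)
      have h := stepA ε hε (min_le_left _ _) t ht
      have h2 : ε * (t/t1) ^ A ≤ η := by
        have : ε ≤ η / (t/t1) ^ A := min_le_right _ _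
        calc ε * (t/t1) ^ A ≤ (η / (t/t1) ^ A) * (t/t1) ^ A :=
              mul_le_mul_of_nonneg_right this hC.le
          _ = η := by field_simp
      have hexp : (v t1 + ε) * (t/t1) ^ A = v t1 * (t/t1) ^ A + ε * (t/t1) ^ A := by ring
      rw [hexp] at h
      have h3 : v t < v t1 * (t/t1) ^ A + η := by linarith only [h, h2]
      simp only [hη_def] at h3
      linarith only [h3, hcon]
    calc v t ≤ v t1 * (t/t1) ^ A := hB
      _ ≤ v t1 * (t/t1) ^ (lam + σ) :=
          mul_le_mul_of_nonneg_left
            (Real.rpow_le_rpow_of_exponent_le h1le (by simp only [hA_def]; linarith)) hv0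
  · -- PART 2
    intro hpos hγ0
    have hγ' : 0 < -γ := neg_pos.2 hγ0
    set K := ((ν + lam + 2)/(-γ)) ^ (1/((s:ℝ)-1)) with hK_def
    have hbase : 0 < (ν + lam + 2)/(-γ) := div_pos (by linarith) hγ'
    have hK : 0 < K := Real.rpow_pos_of_pos hbase _
    have hKs : K ^ (s-1) = (ν + lam + 2)/(-γ) := hpow_inv _ hbase
    set C3 := M * (K ^ (s-1) + 1) with hC3_def
    have hC3 : 0 < C3 := by
      have : (0:ℝ) < K ^ (s-1) := pow_pos hK _
      positivity
    set t1 := max t0 (max ((2*C3*K) ^ (1/ν)) ((2*C3) ^ (1/((1:ℝ)/(q:ℝ))))) with ht1_def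
    have ht1t0 : t0 ≤ t1 := le_max_left _ _
    have ht1pos : 0 < t1 := lt_of_lt_of_le ht0 ht1t0
    have hKC : True := trivial
    have hb1 : K * t1 ^ (-ν) ≤ 1/(2*C3) := by
      have h := rpow_neg_le_inv (t := t1) (by positivity : (0:ℝ) < 2*C3*K) hν0
        (le_trans (le_max_left _ ((2*C3) ^ (1/((1:ℝ)/(q:ℝ))))) (le_max_right t0 _))
      calc K * t1 ^ (-ν) ≤ K * (2*C3*K)⁻¹ :=
            mul_le_mul_of_nonneg_left h hK.le
        _ = 1/(2*C3) := by field_simp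
    have hb2 : t1 ^ (-(1:ℝ)/(q:ℝ)) ≤ 1/(2*C3) := by
      have hqinv : (0:ℝ) < (1:ℝ)/(q:ℝ) := by positivity
      have h := rpow_neg_le_inv (t := t1) (by positivity : (0:ℝ) < 2*C3) hqinv
        (le_trans (le_max_right ((2*C3*K) ^ (1/ν)) _) (le_max_right t0 _))
      rw [neg_div]
      calc t1 ^ (-((1:ℝ)/(q:ℝ))) ≤ (2*C3)⁻¹ := h
        _ = 1/(2*C3) := (one_div _).symm
    clear_value K C3 t1
    refine ⟨K * t1 ^ (-ν) / 2, by positivity, t1, ht1t0, K, hK, ?_⟩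
    intro v hadm hvδ t ht
    obtain ⟨hrange, ρ, hρ, hderiv⟩ := hadm
    have key : ∀ r ≥ t1, v r < K * r ^ (-ν) := by
      refine barrier (f := fun r => γ * r ^ (-(m:ℝ)/(q:ℝ)) * v r ^ s
          + lam * r ^ (-(n:ℝ)/(q:ℝ)) * v r + ρ r)
        (g := fun r => K * (-ν * r ^ (-ν - 1)))
        (fun r hr => hderiv r (le_trans ht1t0 hr)) (fun r hr => ?_) ?_ ?_
      · exact (Real.hasDerivAt_rpow_const
          (Or.inl (ne_of_gt (lt_of_lt_of_le ht1pos hr)))).const_mul K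
      · have : 0 < K * t1 ^ (-ν) := by positivity
        calc v t1 ≤ K * t1 ^ (-ν) / 2 := hvδ
          _ < K * t1 ^ (-ν) := by linarith
      · intro r hr hvr
        have hr0 : 0 < r := lt_trans ht1pos hr
        have hrt0 : t0 ≤ r := le_trans ht1t0 hr.le
        set x := v r with hx_def
        have hxpos : 0 < x := by
          rw [hvr]; positivity
        set p := r ^ (-(m:ℝ)/(q:ℝ)) with hp_def
        have hp : 0 < p := Real.rpow_pos_of_pos hr0 _
        have hps : p * x ^ (s-1) = K ^ (s-1) * r⁻¹ := by
          rw [hvr, mul_pow, ← mul_assoc, mul_comm p, mul_assoc, hcollapse r hr0]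
        have hterm1 : γ * p * x ^ s = γ * K ^ (s-1) * r⁻¹ * x := by
          rw [hsplit x, show γ * p * (x^(s-1) * x) = γ * (p * x^(s-1)) * x by ring, hps]
          ring
        -- remainder bound
        have hmono_ν : r ^ (-ν) ≤ t1 ^ (-ν) :=
          Real.rpow_le_rpow_of_nonpos ht1pos hr.le (by linarith)
        have hmono_q : r ^ (-(1:ℝ)/(q:ℝ)) ≤ t1 ^ (-(1:ℝ)/(q:ℝ)) :=
          Real.rpow_le_rpow_of_nonpos ht1pos hr.le
            (by rw [neg_div]; exact neg_nonpos.2 (by positivity))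
        have hsum : x + r ^ (-(1:ℝ)/(q:ℝ)) ≤ 1/C3 := by
          have h1 : x ≤ 1/(2*C3) := by
            rw [hvr]
            calc K * r ^ (-ν) ≤ K * t1 ^ (-ν) := by
                  exact mul_le_mul_of_nonneg_left hmono_ν hK.le
              _ ≤ 1/(2*C3) := hb1
          have h2 : r ^ (-(1:ℝ)/(q:ℝ)) ≤ 1/(2*C3) := le_trans hmono_q hb2
          calc x + r ^ (-(1:ℝ)/(q:ℝ)) ≤ 1/(2*C3) + 1/(2*C3) := add_le_add h1 h2
            _ = 1/C3 := by rw [← add_div]; rw [show (1:ℝ)+1 = 2 from by norm_num]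
                           rw [show (2:ℝ)*C3 = C3*2 from by ring, ← div_div]
                           rw [div_div_cancel_left' (by norm_num : (2:ℝ) ≠ 0), one_div]
        have hρr : ρ r ≤ x * r⁻¹ := by
          have hb := hρ r hrt0
          have hps' : p * x ^ s = K ^ (s-1) * r⁻¹ * x := by
            rw [hsplit x, ← mul_assoc, hps]
          have hrw : M * (p * x ^ s + r ^ (-(n:ℝ)/(q:ℝ)) * x) * (x + r ^ (-(1:ℝ)/(q:ℝ)))
              = C3 * (r⁻¹ * x) * (x + r ^ (-(1:ℝ)/(q:ℝ))) := by
            rw [htinv, hps', hC3_def]; ring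
          have hb2' : |ρ r| ≤ C3 * (r⁻¹ * x) * (x + r ^ (-(1:ℝ)/(q:ℝ))) := by
            rw [← hrw]; exact hb
          calc ρ r ≤ |ρ r| := le_abs_self _
            _ ≤ C3 * (r⁻¹ * x) * (x + r ^ (-(1:ℝ)/(q:ℝ))) := hb2'
            _ ≤ C3 * (r⁻¹ * x) * (1/C3) := by
                apply mul_le_mul_of_nonneg_left hsum
                positivity
            _ = x * r⁻¹ := by
                rw [show C3 * (r⁻¹ * x) * (1/C3) = (C3 / C3) * (x * r⁻¹) from by ring,
                  div_self hC3.ne', one_mul]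
        have hγK : γ * K ^ (s-1) = -(ν + lam + 2) := by
          rw [hKs]; field_simp
        have hgr : K * (-ν * r ^ (-ν - 1)) = -ν * r⁻¹ * x := by
          rw [hvr, show -ν - 1 = -ν + (-1) by ring, Real.rpow_add hr0, Real.rpow_neg_one]
          ring
        show γ * r ^ (-(m:ℝ)/(q:ℝ)) * v r ^ s + lam * r ^ (-(n:ℝ)/(q:ℝ)) * v r + ρ r
            < K * (-ν * r ^ (-ν - 1))
        rw [htinv, hgr]
        have hrx : 0 < r⁻¹ * x := by positivity
        calc γ * p * x ^ s + lam * r⁻¹ * x + ρ r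
            ≤ γ * K ^ (s-1) * r⁻¹ * x + lam * r⁻¹ * x + x * r⁻¹ := by
              rw [hterm1]; linarith only [hρr]
          _ = (γ * K ^ (s-1) + lam + 1) * (r⁻¹ * x) := by ring
          _ = (-ν - 1) * (r⁻¹ * x) := by rw [hγK]; ring
          _ < -ν * (r⁻¹ * x) := mul_lt_mul_of_pos_right (sub_lt_self (-ν) one_pos) hrx
          _ = -ν * r⁻¹ * x := by ring
    exact (key t ht).le
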